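/- For integers $\ell \ge 1$ and $r \ge 2^{\ell}$, the cardinality $A(r,\ell)$ of $\{k \in \mathbb{N}^{\ell} : \prod_{j=1}^{\ell}(1+k_j) \le r\}$ (with all $k_j \ge 1$) satisfies $2^{\ell} v_{\ell}(r/2^{\ell}) \le A(r,\ell) \le v_{\ell}(r)$, where $v_{\ell}(r)$ is the volume of $\{x \in \mathbb{R}^{\ell} : x_j \ge 1, \prod x_j \le r\}$. -/

import Mathlib

open MeasureTheory
open scoped ENNReal Pointwise

/-- `A r ℓ` : number of points `k ∈ ℕ^ℓ` with all `k_j ≥ 1` and `∏ (1+k_j) ≤ r`. -/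
noncomputable def posCount (r ℓ : ℕ) : ℕ :=
  Set.ncard {k : Fin ℓ → ℕ | (∀ j, 1 ≤ k j) ∧ ∏ j, (1 + k j) ≤ r}

/-- `v ℓ r` : the `ℓ`-dimensional Lebesgue volume of the hyperbolic-cross set
`{x ∈ ℝ^ℓ : x_j ≥ 1 for all j, ∏ x_j ≤ r}`. -/
noncomputable def hypVol (ℓ : ℕ) (r : ℝ) : ℝ :=
  (volume {x : Fin ℓ → ℝ | (∀ j, 1 ≤ x j) ∧ ∏ j, x j ≤ r}).toReal

theorem stmt4 (ℓ r : ℕ) (hℓ : 1 ≤ ℓ) (hr : 2 ^ ℓ ≤ r) :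
    2 ^ ℓ * hypVol ℓ ((r : ℝ) / 2 ^ ℓ) ≤ (posCount r ℓ : ℝ) ∧
    (posCount r ℓ : ℝ) ≤ hypVol ℓ (r : ℝ) := by
  classical
  set S : Set (Fin ℓ → ℕ) := {k | (∀ j, 1 ≤ k j) ∧ ∏ j, (1 + k j) ≤ r} with hSdef
  have hSfin : S.Finite := by
    apply Set.Finite.subset (Set.Finite.pi (fun _ : Fin ℓ => Set.finite_Iic r))
    rintro k ⟨h1, h2⟩
    intro j _
    have hle : 1 + k j ≤ ∏ i, (1 + k i) :=
      Finset.single_le_prod' (fun i _ => Nat.le_add_right 1 (k i)) (Finset.mem_univ j)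
    have : 1 + k j ≤ r := le_trans hle h2
    simpa using Nat.le_of_lt_succ (by omega)
  set F : Finset (Fin ℓ → ℕ) := hSfin.toFinset with hF
  have hcard : posCount r ℓ = F.card := Set.ncard_eq_toFinset_card S hSfin
  -- Upper bound via disjoint unit cubes [k, k+1)
  set cube : (Fin ℓ → ℕ) → Set (Fin ℓ → ℝ) :=
    fun k => Set.pi Set.univ fun j => Set.Ico (k j : ℝ) ((k j : ℝ) + 1) with hcube
  have hcubevol : ∀ k, volume (cube k) = 1 := by
    intro k
    rw [hcube]
    simp [volume_pi_pi, Real.volume_Ico]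
  have hcube_meas : ∀ k, MeasurableSet (cube k) :=
    fun k => MeasurableSet.univ_pi fun j => measurableSet_Ico
  have hdisj : (↑F : Set (Fin ℓ → ℕ)).PairwiseDisjoint cube := by
    intro a _ b _ hab
    refine Set.disjoint_left.2 fun x hxa hxb => hab ?_
    funext j
    have h1 := hxa j (Set.mem_univ j)
    have h2 := hxb j (Set.mem_univ j)
    simp only [Set.mem_Ico] at h1 h2
    have hA : (a j : ℝ) < (b j : ℝ) + 1 := lt_of_le_of_lt h1.1 h2.2
    have hB : (b j : ℝ) < (a j : ℝ) + 1 := lt_of_le_of_lt h2.1 h1.2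
    have hA' : a j < b j + 1 := by exact_mod_cast hA
    have hB' : b j < a j + 1 := by exact_mod_cast hB
    omega
  have hupper : (F.card : ℝ≥0∞) ≤
      volume {x : Fin ℓ → ℝ | (∀ j, 1 ≤ x j) ∧ ∏ j, x j ≤ (r : ℝ)} := by
    have hsub : (⋃ k ∈ F, cube k) ⊆
        {x : Fin ℓ → ℝ | (∀ j, 1 ≤ x j) ∧ ∏ j, x j ≤ (r : ℝ)} := by
      intro x hx
      simp only [Set.mem_iUnion] at hx
      obtain ⟨k, hkF, hxk⟩ := hx
      have hkS : k ∈ S := hSfin.mem_toFinset.1 hkF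
      have hxk' : ∀ j, (k j : ℝ) ≤ x j ∧ x j < (k j : ℝ) + 1 := by
        intro j
        have := hxk j (Set.mem_univ j)
        simpa [hcube] using this
      constructor
      · intro j
        have h1 : (1 : ℝ) ≤ (k j : ℝ) := by exact_mod_cast hkS.1 j
        linarith [(hxk' j).1]
      · have hle : ∏ j, x j ≤ ∏ j, ((k j : ℝ) + 1) := by
          apply Finset.prod_le_prod
          · intro j _
            have h1 : (1 : ℝ) ≤ (k j : ℝ) := by exact_mod_cast hkS.1 j
            linarith [(hxk' j).1]
          · intro j _
            exact le_of_lt (hxk' j).2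
        have hc : ((∏ j, (1 + k j) : ℕ) : ℝ) ≤ (r : ℝ) := by exact_mod_cast hkS.2
        rw [Nat.cast_prod] at hc
        simp only [Nat.cast_add, Nat.cast_one] at hc
        calc ∏ j, x j ≤ ∏ j, ((k j : ℝ) + 1) := hle
          _ = ∏ j, (1 + (k j : ℝ)) := by simp [add_comm]
          _ ≤ (r : ℝ) := hc
    calc (F.card : ℝ≥0∞) = ∑ k ∈ F, volume (cube k) := by simp [hcubevol]
      _ = volume (⋃ k ∈ F, cube k) :=
          (measure_biUnion_finset hdisj (fun k _ => hcube_meas k)).symm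
      _ ≤ _ := measure_mono hsub
  -- finiteness of the big volume
  have hHfin : volume {x : Fin ℓ → ℝ | (∀ j, 1 ≤ x j) ∧ ∏ j, x j ≤ (r : ℝ)} ≠ ⊤ := by
    have hsub : {x : Fin ℓ → ℝ | (∀ j, 1 ≤ x j) ∧ ∏ j, x j ≤ (r : ℝ)} ⊆
        Set.pi Set.univ fun _ => Set.Icc (1 : ℝ) (r : ℝ) := by
      rintro x ⟨h1, h2⟩ j _
      refine ⟨h1 j, ?_⟩
      have hone : (1 : ℝ) ≤ ∏ i ∈ Finset.univ.erase j, x i := by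
        have := Finset.prod_le_prod (f := fun _ : Fin ℓ => (1 : ℝ))
          (g := fun i => x i) (s := Finset.univ.erase j)
          (fun i _ => zero_le_one) (fun i _ => h1 i)
        simpa using this
      have hkey : x j * ∏ i ∈ Finset.univ.erase j, x i = ∏ i, x i :=
        Finset.mul_prod_erase Finset.univ x (Finset.mem_univ j)
      have hx0 : (0 : ℝ) ≤ x j := le_trans zero_le_one (h1 j)
      nlinarith [h2, hone, hkey]
    have hfin : volume (Set.pi Set.univ fun _ : Fin ℓ => Set.Icc (1 : ℝ) (r : ℝ)) < ⊤ := by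
      rw [volume_pi_pi]
      simp only [Real.volume_Icc, Finset.prod_const, Finset.card_univ, Fintype.card_fin]
      exact ENNReal.pow_lt_top ENNReal.ofReal_lt_top
    exact ne_top_of_le_ne_top hfin.ne (measure_mono hsub)
  have hupperR : (posCount r ℓ : ℝ) ≤ hypVol ℓ (r : ℝ) := by
    rw [hcard, hypVol]
    have := ENNReal.toReal_mono hHfin hupper
    simpa using this
  -- Lower bound
  set T : Set (Fin ℓ → ℝ) := {x | (∀ j, 2 ≤ x j) ∧ ∏ j, x j ≤ (r : ℝ)} with hT
  set cube2 : (Fin ℓ → ℕ) → Set (Fin ℓ → ℝ) :=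
    fun k => Set.pi Set.univ fun j => Set.Ico ((k j : ℝ) + 1) ((k j : ℝ) + 2) with hcube2
  have hcube2vol : ∀ k, volume (cube2 k) = 1 := by
    intro k
    rw [hcube2]
    simp only []
    rw [volume_pi_pi]
    have : ∀ j : Fin ℓ, volume (Set.Ico ((k j : ℝ) + 1) ((k j : ℝ) + 2)) = 1 := by
      intro j
      rw [Real.volume_Ico]
      norm_num
    simp [this]
  have hTsub : T ⊆ ⋃ k ∈ F, cube2 k := by
    rintro x ⟨h2, hprod⟩
    have hx0 : ∀ j, (0 : ℝ) ≤ x j := fun j => le_trans (by norm_num) (h2 j)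
    set k : Fin ℓ → ℕ := fun j => ⌊x j⌋₊ - 1 with hk
    have hfl2 : ∀ j, 2 ≤ ⌊x j⌋₊ := fun j => Nat.le_floor (by exact_mod_cast h2 j)
    have hk1 : ∀ j, (k j : ℝ) + 1 = (⌊x j⌋₊ : ℝ) := by
      intro j
      have h1 : 1 ≤ ⌊x j⌋₊ := le_trans one_le_two (hfl2 j)
      rw [hk]
      push_cast [Nat.cast_sub h1]
      ring
    have hkS : k ∈ S := by
      constructor
      · intro j
        have := hfl2 j
        simp only [hk]
        omega
      · have hpf : ((∏ j, (1 + k j) : ℕ) : ℝ) ≤ (r : ℝ) := by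
          rw [Nat.cast_prod]
          calc ∏ j, ((1 + k j : ℕ) : ℝ) = ∏ j, (⌊x j⌋₊ : ℝ) := by
                refine Finset.prod_congr rfl fun j _ => ?_
                push_cast
                linarith [hk1 j]
            _ ≤ ∏ j, x j :=
                Finset.prod_le_prod (fun j _ => by positivity)
                  (fun j _ => Nat.floor_le (hx0 j))
            _ ≤ (r : ℝ) := hprod
        exact_mod_cast hpf
    refine Set.mem_iUnion.2 ⟨k, Set.mem_iUnion.2 ⟨hSfin.mem_toFinset.2 hkS, ?_⟩⟩
    intro j _
    simp only [Set.mem_Ico]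
    constructor
    · rw [hk1 j]
      exact Nat.floor_le (hx0 j)
    · have := Nat.lt_floor_add_one (x j)
      linarith [hk1 j]
  have hlow : volume T ≤ (F.card : ℝ≥0∞) := by
    calc volume T ≤ volume (⋃ k ∈ F, cube2 k) := measure_mono hTsub
      _ ≤ ∑ k ∈ F, volume (cube2 k) := measure_biUnion_finset_le F cube2
      _ = F.card := by simp [hcube2vol]
  -- scaling
  set H' : Set (Fin ℓ → ℝ) := {x | (∀ j, 1 ≤ x j) ∧ ∏ j, x j ≤ (r : ℝ) / 2 ^ ℓ} with hH'
  have hTeq : T = (2 : ℝ) • H' := by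
    ext x
    rw [Set.mem_smul_set_iff_inv_smul_mem₀ (two_ne_zero) H' x]
    simp only [hT, hH', Set.mem_setOf_eq, Pi.smul_apply, smul_eq_mul]
    have hpos : (0 : ℝ) < 2⁻¹ ^ ℓ := by positivity
    have key : ∏ j, ((2 : ℝ)⁻¹ * x j) = 2⁻¹ ^ ℓ * ∏ j, x j := by
      rw [Finset.prod_mul_distrib, Finset.prod_const, Finset.card_univ, Fintype.card_fin]
    have hdiv : (r : ℝ) / 2 ^ ℓ = 2⁻¹ ^ ℓ * r := by
      rw [div_eq_mul_inv, ← inv_pow, mul_comm]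
    constructor
    · rintro ⟨h2, hp⟩
      exact ⟨fun j => by have := h2 j; linarith,
        by rw [key, hdiv]; exact (mul_le_mul_iff_right₀ hpos).2 hp⟩
    · rintro ⟨h1, hp⟩
      refine ⟨fun j => by have := h1 j; linarith, ?_⟩
      rw [key, hdiv] at hp
      exact (mul_le_mul_iff_right₀ hpos).1 hp
  have hsm : volume T = ENNReal.ofReal ((2 : ℝ) ^ ℓ) * volume H' := by
    rw [hTeq, Measure.addHaar_smul]
    congr 2
    rw [Module.finrank_fintype_fun_eq_card, Fintype.card_fin]
    rw [abs_of_nonneg (by positivity)]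
  have hlow2 : ENNReal.ofReal ((2 : ℝ) ^ ℓ) * volume H' ≤ (F.card : ℝ≥0∞) := by
    rw [← hsm]; exact hlow
  have hH'fin : volume H' ≠ ⊤ := by
    intro h
    rw [h, ENNReal.mul_top (by simp [ENNReal.ofReal_eq_zero])] at hlow2
    exact (ENNReal.natCast_lt_top F.card).not_ge (by simpa using hlow2)
  have hlowR : 2 ^ ℓ * hypVol ℓ ((r : ℝ) / 2 ^ ℓ) ≤ (posCount r ℓ : ℝ) := by
    rw [hcard, hypVol]
    have hfin : ENNReal.ofReal ((2 : ℝ) ^ ℓ) * volume H' ≠ ⊤ :=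
      ENNReal.mul_ne_top ENNReal.ofReal_ne_top hH'fin
    have := ENNReal.toReal_mono (ENNReal.natCast_ne_top F.card) hlow2
    rw [ENNReal.toReal_mul, ENNReal.toReal_ofReal (by positivity)] at this
    simpa using this
  exact ⟨hlowR, hupperR⟩
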